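/- Let 0 ≤ α < 1 and 0 < r < 1. If |aₙ| ≤ ((n+1)/2)² and |bₙ| ≤ ((n-1)/2)² for all n ≥ 2 (with b₁ = 0), and 2(1-α)(1-r)⁴ + α(1-r)² - (r² + r + 1) ≥ 0, then ∑_{n≥2} ((n-α)/(1-α))|aₙ| r^{n-1} + ∑_{n≥2} ((n+α)/(1-α))|bₙ| r^{n-1} ≤ 1. -/

import Mathlib

lemma ch2_aux (n : ℕ) : (n + 2).choose 2 * 2 = (n + 1) * (n + 2) := by
  induction n with
  | zero => rfl
  | succ k ih =>
    have h : (k + 3).choose 2 = (k + 2).choose 1 + (k + 2).choose 2 :=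
      Nat.choose_succ_succ (k + 2) 1
    rw [show k + 1 + 2 = k + 3 from rfl, h, Nat.choose_one_right, Nat.add_mul, ih]
    ring

lemma ch3_aux (n : ℕ) : (n + 3).choose 3 * 6 = (n + 1) * (n + 2) * (n + 3) := by
  induction n with
  | zero => rfl
  | succ k ih =>
    have h : (k + 4).choose 3 = (k + 3).choose 2 + (k + 3).choose 3 :=
      Nat.choose_succ_succ (k + 3) 2
    have h2 := ch2_aux (k + 1)
    rw [show k + 1 + 2 = k + 3 from rfl] at h2
    rw [show k + 1 + 3 = k + 4 from rfl, h, Nat.add_mul,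
      show (k + 3).choose 2 * 6 = (k + 3).choose 2 * 2 * 3 by ring, h2, ih]
    ring

lemma ch3_cast (n : ℕ) : ((n + 3).choose 3 : ℝ) = ((n : ℝ) + 1) * ((n : ℝ) + 2) * ((n : ℝ) + 3) / 6 := by
  have := ch3_aux n
  have : (((n + 3).choose 3 * 6 : ℕ) : ℝ) = (((n + 1) * (n + 2) * (n + 3) : ℕ) : ℝ) := by
    exact_mod_cast congrArg (Nat.cast (R := ℝ)) this
  push_cast at this
  linarith

theorem stmt_17 (α : ℝ) (hα0 : 0 ≤ α) (hα1 : α < 1) (r : ℝ) (h0 : 0 < r) (h1 : r < 1)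
    (a b : ℕ → ℂ) (hb1 : b 1 = 0)
    (ha : ∀ n : ℕ, 2 ≤ n → ‖a n‖ ≤ ((n + 1) / 2) ^ 2)
    (hb : ∀ n : ℕ, 2 ≤ n → ‖b n‖ ≤ ((n - 1) / 2) ^ 2)
    (hpoly : 0 ≤ 2 * (1 - α) * (1 - r) ^ 4 + α * (1 - r) ^ 2 - (r ^ 2 + r + 1)) :
    (∑' n : ℕ, (((n + 2 : ℝ) - α) / (1 - α)) * ‖a (n + 2)‖ * r ^ (n + 1))
      + (∑' n : ℕ, (((n + 2 : ℝ) + α) / (1 - α)) * ‖b (n + 2)‖ * r ^ (n + 1)) ≤ 1 := by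
  have hα : (0:ℝ) < 1 - α := by linarith
  have hr : (0:ℝ) < 1 - r := by linarith
  have hrn : ‖r‖ < 1 := by rw [Real.norm_eq_abs, abs_of_pos h0]; exact h1
  set ga : ℕ → ℝ := fun n ↦ (((n:ℝ) + 2 - α) / (1 - α)) * (((n:ℝ) + 3) / 2) ^ 2 * r ^ (n + 1)
    with hga
  set gb : ℕ → ℝ := fun n ↦ (((n:ℝ) + 2 + α) / (1 - α)) * (((n:ℝ) + 1) / 2) ^ 2 * r ^ (n + 1)
    with hgb
  -- coefficient positivity facts
  have hcoefa : ∀ n : ℕ, 0 ≤ ((n:ℝ) + 2 - α) / (1 - α) := fun n ↦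
    div_nonneg (by have : (0:ℝ) ≤ (n:ℝ) := Nat.cast_nonneg n; linarith) hα.le
  have hcoefb : ∀ n : ℕ, 0 ≤ ((n:ℝ) + 2 + α) / (1 - α) := fun n ↦ by positivity
  have hrp : ∀ n : ℕ, (0:ℝ) ≤ r ^ (n + 1) := fun n ↦ by positivity
  -- the combined majorant has an explicit sum
  have h3 := hasSum_choose_mul_geometric_of_norm_lt_one 3 hrn (𝕜 := ℝ)
  have hc1 := hasSum_choose_mul_geometric_of_norm_lt_one 1 hrn (𝕜 := ℝ)
  have hc0 := hasSum_choose_mul_geometric_of_norm_lt_one 0 hrn (𝕜 := ℝ)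
  have hsum : HasSum (fun n ↦ ga n + gb n)
      (((3 / (1 - α)) * (1 / (1 - r) ^ 4) + 1 / (1 - r) ^ 2 + 1 / (1 - r) ^ 1) * r) := by
    have H := (((h3.mul_left (3 / (1 - α))).add hc1).add hc0).mul_right r
    convert H using 1
    · rfl
    funext n
    have e3 := ch3_cast n
    have e1 : ((n + 1).choose 1 : ℝ) = (n : ℝ) + 1 := by
      rw [Nat.choose_one_right]; push_cast; ring
    have e0 : ((n + 0).choose 0 : ℝ) = 1 := by simp
    simp only [hga, hgb, e3, e1, e0]
    field_simp
    ring
  -- summability of each majorant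
  have hga_sum : Summable ga := by
    have h := hsum.summable
    have hbnn : ∀ n, 0 ≤ gb n := fun n ↦ by
      simp only [hgb]
      exact mul_nonneg (mul_nonneg (hcoefb n) (by positivity)) (hrp n)
    have hann : ∀ n, 0 ≤ ga n := fun n ↦ by
      simp only [hga]
      exact mul_nonneg (mul_nonneg (hcoefa n) (by positivity)) (hrp n)
    exact h.of_nonneg_of_le hann (fun n ↦ le_add_of_nonneg_right (hbnn n))
  have hgb_sum : Summable gb := by
    have h := hsum.summable
    have hbnn : ∀ n, 0 ≤ gb n := fun n ↦ by
      simp only [hgb]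
      exact mul_nonneg (mul_nonneg (hcoefb n) (by positivity)) (hrp n)
    have hann : ∀ n, 0 ≤ ga n := fun n ↦ by
      simp only [hga]
      exact mul_nonneg (mul_nonneg (hcoefa n) (by positivity)) (hrp n)
    exact h.of_nonneg_of_le hbnn (fun n ↦ le_add_of_nonneg_left (hann n))
  -- termwise bounds
  have hale : ∀ n : ℕ, (((n : ℝ) + 2) - α) / (1 - α) * ‖a (n + 2)‖ * r ^ (n + 1) ≤ ga n := by
    intro n
    have h := ha (n + 2) (by omega)
    have h' : ‖a (n + 2)‖ ≤ (((n:ℝ) + 3) / 2) ^ 2 := by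
      convert h using 3; push_cast; ring
    simp only [hga]
    have := mul_le_mul_of_nonneg_left h' (hcoefa n)
    exact mul_le_mul_of_nonneg_right this (hrp n)
  have hble : ∀ n : ℕ, (((n : ℝ) + 2) + α) / (1 - α) * ‖b (n + 2)‖ * r ^ (n + 1) ≤ gb n := by
    intro n
    have h := hb (n + 2) (by omega)
    have h' : ‖b (n + 2)‖ ≤ (((n:ℝ) + 1) / 2) ^ 2 := by
      convert h using 3; push_cast; ring
    simp only [hgb]
    have := mul_le_mul_of_nonneg_left h' (hcoefb n)
    exact mul_le_mul_of_nonneg_right this (hrp n)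
  -- summability of the original series
  have hannA : ∀ n : ℕ, 0 ≤ (((n : ℝ) + 2) - α) / (1 - α) * ‖a (n + 2)‖ * r ^ (n + 1) :=
    fun n ↦ mul_nonneg (mul_nonneg (hcoefa n) (norm_nonneg _)) (hrp n)
  have hannB : ∀ n : ℕ, 0 ≤ (((n : ℝ) + 2) + α) / (1 - α) * ‖b (n + 2)‖ * r ^ (n + 1) :=
    fun n ↦ mul_nonneg (mul_nonneg (hcoefb n) (norm_nonneg _)) (hrp n)
  have hA_sum : Summable (fun n : ℕ ↦ (((n : ℝ) + 2) - α) / (1 - α) * ‖a (n + 2)‖ * r ^ (n + 1)) :=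
    hga_sum.of_nonneg_of_le hannA hale
  have hB_sum : Summable (fun n : ℕ ↦ (((n : ℝ) + 2) + α) / (1 - α) * ‖b (n + 2)‖ * r ^ (n + 1)) :=
    hgb_sum.of_nonneg_of_le hannB hble
  -- compare tsums
  have hAle : (∑' n : ℕ, (((n : ℝ) + 2) - α) / (1 - α) * ‖a (n + 2)‖ * r ^ (n + 1)) ≤ ∑' n, ga n :=
    Summable.tsum_le_tsum hale hA_sum hga_sum
  have hBle : (∑' n : ℕ, (((n : ℝ) + 2) + α) / (1 - α) * ‖b (n + 2)‖ * r ^ (n + 1)) ≤ ∑' n, gb n :=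
    Summable.tsum_le_tsum hble hB_sum hgb_sum
  have htot : (∑' n, ga n) + (∑' n, gb n)
      = ((3 / (1 - α)) * (1 / (1 - r) ^ 4) + 1 / (1 - r) ^ 2 + 1 / (1 - r) ^ 1) * r := by
    rw [← Summable.tsum_add hga_sum hgb_sum]
    exact hsum.tsum_eq
  have hT : ((3 / (1 - α)) * (1 / (1 - r) ^ 4) + 1 / (1 - r) ^ 2 + 1 / (1 - r) ^ 1) * r ≤ 1 := by
    have e : (3 / (1 - α)) * (1 / (1 - r) ^ 4) + 1 / (1 - r) ^ 2 + 1 / (1 - r) ^ 1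
        = (3 + (1 - α) * (1 - r) ^ 2 + (1 - α) * (1 - r) ^ 3) / ((1 - α) * (1 - r) ^ 4) := by
      field_simp
    rw [e, div_mul_eq_mul_div, div_le_one (by positivity)]
    nlinarith [hpoly]
  calc (∑' n : ℕ, (((n : ℝ) + 2) - α) / (1 - α) * ‖a (n + 2)‖ * r ^ (n + 1))
        + (∑' n : ℕ, (((n : ℝ) + 2) + α) / (1 - α) * ‖b (n + 2)‖ * r ^ (n + 1))
      ≤ (∑' n, ga n) + (∑' n, gb n) := add_le_add hAle hBle
    _ = _ := htot
    _ ≤ 1 := hT
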